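/- If b ∈ 𝔽_q with b ≠ 0 and b ≠ 1, and a = b + b^{−1}, then the polynomial z³ + z + a has exactly one root in 𝔽_q. -/

import Mathlib

/-- Let `m` be an odd positive integer, `q = 2^m`, and `F` a finite field
with `q` elements.  If `b ∈ F` with `b ≠ 0`, `b ≠ 1`, and `a = b + b⁻¹`, then the polynomial
`z³ + z + a` has exactly one root in `F`. -/
theorem statement9 (m : ℕ) (hm : Odd m) (hmpos : 0 < m)
    (F : Type*) [Field F] [Fintype F] (hcard : Fintype.card F = 2 ^ m)
    (b : F) (hb0 : b ≠ 0) (hb1 : b ≠ 1) (a : F) (ha : a = b + b⁻¹) :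
    Nat.card {z : F // z ^ 3 + z + a = 0} = 1 := by
  -- characteristic 2
  obtain ⟨n, hp, hcard'⟩ := FiniteField.card F (ringChar F)
  have hdvd : ringChar F ∣ 2 ^ m := by
    rw [← hcard, hcard']
    exact dvd_pow_self _ n.pos.ne'
  have hchar : ringChar F = 2 :=
    (Nat.prime_dvd_prime_iff_eq hp Nat.prime_two).mp (hp.dvd_of_dvd_pow hdvd)
  haveI : CharP F 2 := hchar ▸ ringChar.charP F
  have h2 : (1 : F) + 1 = 0 := by
    have h := CharP.cast_eq_zero F 2
    push_cast at h
    linear_combination h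
  -- 3 is coprime to q - 1, so cubing has trivial kernel
  have hcop : Nat.Coprime 3 (Fintype.card F - 1) := by
    rw [hcard, Nat.Prime.coprime_iff_not_dvd Nat.prime_three]
    intro hdvd3
    have h1 : ((2 ^ m - 1 : ℕ) : ZMod 3) = 0 :=
      (ZMod.natCast_eq_zero_iff _ _).mpr hdvd3
    rw [Nat.cast_sub Nat.one_le_two_pow] at h1
    push_cast at h1
    obtain ⟨k, hk⟩ := hm
    rw [hk, pow_succ, pow_mul] at h1
    have e : (2 : ZMod 3) ^ 2 = 1 := by decide
    rw [e, one_pow] at h1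
    revert h1
    decide
  haveI : Fintype Fˣ := Fintype.ofFinite _
  have hcube1 : ∀ x : F, x ^ 3 = 1 → x = 1 := by
    intro x hx
    have hx0 : x ≠ 0 := by rintro rfl; simp at hx
    have hd1 : orderOf (Units.mk0 x hx0) ∣ 3 := by
      apply orderOf_dvd_of_pow_eq_one
      ext
      simpa using hx
    have hd2 : orderOf (Units.mk0 x hx0) ∣ Fintype.card F - 1 := by
      have := orderOf_dvd_natCard (Units.mk0 x hx0)
      rwa [Nat.card_units, Nat.card_eq_fintype_card] at this
    have h1 : orderOf (Units.mk0 x hx0) = 1 :=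
      Nat.dvd_one.mp (hcop ▸ Nat.dvd_gcd hd1 hd2)
    have h1' := orderOf_eq_one_iff.mp h1
    have : (Units.mk0 x hx0 : F) = 1 := by rw [h1']; rfl
    simpa using this
  have cube_inj : Function.Injective (fun x : F => x ^ 3) := by
    intro x y hxy
    simp only at hxy
    rcases eq_or_ne y 0 with rfl | hy0
    · simpa [pow_eq_zero_iff] using hxy
    · have h3 : (x * y⁻¹) ^ 3 = 1 := by
        field_simp
        exact hxy
      have h4 := hcube1 _ h3
      field_simp at h4
      exact h4
  obtain ⟨c, hc⟩ := (Finite.injective_iff_surjective.mp cube_inj) b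
  simp only at hc
  have hc0 : c ≠ 0 := by rintro rfl; simp at hc; exact hb0 hc.symm
  have hc1 : c ≠ 1 := by rintro rfl; simp at hc; exact hb1 hc.symm
  have hcm1 : c + 1 ≠ 0 := by
    intro h
    exact hc1 (by linear_combination h - h2)
  set z : F := c + c⁻¹ with hzdef
  have hz0 : z ≠ 0 := by
    intro h
    apply hcm1
    have hmul : c * z = c ^ 2 + 1 := by rw [hzdef, mul_add, mul_inv_cancel₀ hc0]; ring
    have hcsq : (c + 1) ^ 2 = 0 := by
      rw [h, mul_zero] at hmul
      linear_combination -hmul + c * h2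
    exact pow_eq_zero_iff (by norm_num) |>.mp hcsq
  have hzinv : z * z⁻¹ = 1 := mul_inv_cancel₀ hz0
  have hz : z ^ 3 + z + a = 0 := by
    rw [ha, ← hc, hzdef]
    field_simp
    ring_nf
    linear_combination (1 + 2 * c ^ 2 + 2 * c ^ 4 + c ^ 6) * h2
  -- uniqueness
  have key : ∀ x : F, x ^ 3 + x + a = 0 → x = z := by
    intro x hx
    by_contra hne
    have hq : x ^ 2 + x * z + z ^ 2 + 1 = 0 := by
      have hfac : (x + z) * (x ^ 2 + x * z + z ^ 2 + 1) = 0 := by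
        linear_combination hx - hz + (x ^ 2 * z + x * z ^ 2 + x * z - x * c - x * c⁻¹
          + c + 3 * c * c⁻¹ ^ 2 + 3 * c ^ 2 * c⁻¹ + c ^ 3 + c⁻¹ + c⁻¹ ^ 3) * h2
      rcases mul_eq_zero.mp hfac with h | h
      · exact absurd (by linear_combination h - z * h2) hne
      · exact h
    -- u = x/z satisfies u² + u + 1 + z⁻² = 0
    have hu : (x * z⁻¹) ^ 2 + (x * z⁻¹) + 1 + (z⁻¹) ^ 2 = 0 := by
      linear_combination (z⁻¹) ^ 2 * hq - (x * z⁻¹ + z * z⁻¹ + 1) * hzinv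
    -- v = u + 1 + z⁻¹ satisfies v² + v = 1 + z⁻¹
    set v : F := x * z⁻¹ + 1 + z⁻¹ with hvdef
    have hv : v ^ 2 + v = 1 + z⁻¹ := by
      rw [hvdef]
      linear_combination hu + (x * z⁻¹ + z⁻¹ + x * z⁻¹ * z⁻¹) * h2
    -- s = 1/(c+1) satisfies s² + s = z⁻¹
    set s : F := (c + 1)⁻¹ with hsdef
    have hA : s * (c + 1) = 1 := by rw [hsdef]; exact inv_mul_cancel₀ hcm1
    have hB : z * c = c ^ 2 + 1 := by rw [hzdef, add_mul, inv_mul_cancel₀ hc0]; ring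
    have hC : z * c = (c + 1) ^ 2 := by linear_combination hB - c * h2
    have hD : s ^ 2 * c * z = 1 := by
      have : s ^ 2 * (z * c) = 1 := by
        rw [hC]; linear_combination (s * (c + 1) + 1) * hA
      linear_combination this
    have hzi : s ^ 2 * c = z⁻¹ := eq_inv_of_mul_eq_one_left hD
    have hE : s ^ 2 + s = z⁻¹ := by
      linear_combination hzi - s * hA + s ^ 2 * h2
    -- t = v + s satisfies t² + t + 1 = 0
    set t : F := v + s with htdef
    have ht : t ^ 2 + t + 1 = 0 := by
      rw [htdef]
      linear_combination hv + hE + (z⁻¹ + v * s + 1) * h2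
    have ht3 : t ^ 3 = 1 := by
      linear_combination (t - 1) * ht
    have ht1 := hcube1 t ht3
    rw [ht1] at ht
    have : (1 : F) = 0 := by linear_combination ht - h2
    exact one_ne_zero this
  rw [Nat.card_eq_one_iff_unique]
  refine ⟨⟨fun x y => ?_⟩, ⟨⟨z, hz⟩⟩⟩
  obtain ⟨x, hx⟩ := x
  obtain ⟨y, hy⟩ := y
  exact Subtype.ext ((key x hx).trans (key y hy).symm)
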